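/- Let w(β_n) = min over vertices v of the total weight of n-step bridges starting at v. Then w(β_{m+n}) ≥ w(β_m)·w(β_n) for all m,n ≥ 0, and consequently the limit β = lim_{n→∞} w(β_n)^{1/n} exists and satisfies w(β_n) ≤ β^n for all n ≥ 0. -/

import Mathlib

open Filter Topology

/-- An `n`-step self-avoiding walk on the graph `G`. -/
def GraphSAW {V : Type*} (G : SimpleGraph V) (n : ℕ) (π : Fin (n + 1) → V) : Prop :=
  Function.Injective π ∧ ∀ i : Fin n, G.Adj (π i.castSucc) (π i.succ)

/-- A walk is a bridge with respect to the height function `h` if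
`h(π₀) < h(πᵢ) ≤ h(πₙ)` for `1 ≤ i ≤ n`. -/
def IsBridgeWalk {V : Type*} (h : V → ℤ) (n : ℕ) (π : Fin (n + 1) → V) : Prop :=
  ∀ i : Fin (n + 1), (i ≠ 0 → h (π 0) < h (π i)) ∧ h (π i) ≤ h (π (Fin.last n))

/-- The weight of a walk: the product of the edge weights. -/
noncomputable def walkWeight {V : Type*} (φ : V → V → ℝ) (n : ℕ) (π : Fin (n + 1) → V) : ℝ :=
  ∏ i : Fin n, φ (π i.castSucc) (π i.succ)

/-- `w(β_n(v))`: the total weight of `n`-step bridges starting at `v`. -/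
noncomputable def bridgeWeightFrom {V : Type*} (G : SimpleGraph V) (h : V → ℤ)
    (φ : V → V → ℝ) (n : ℕ) (v : V) : ℝ :=
  ∑' π : {π : Fin (n + 1) → V // GraphSAW G n π ∧ IsBridgeWalk h n π ∧ π 0 = v},
    walkWeight φ n π.1

/-- `w(β_n) = min_v w(β_n(v))`. -/
noncomputable def minBridgeWeight {V : Type*} (G : SimpleGraph V) (h : V → ℤ)
    (φ : V → V → ℝ) (n : ℕ) : ℝ :=
  sInf (Set.range (bridgeWeightFrom G h φ n))



lemma walkSet_finite {V : Type*} (G : SimpleGraph V) (hlf : G.LocallyFinite) :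
    ∀ (n : ℕ) (v : V),
      {π : Fin (n+1) → V | π 0 = v ∧ ∀ i : Fin n, G.Adj (π i.castSucc) (π i.succ)}.Finite := by
  intro n
  induction n with
  | zero =>
    intro v
    apply Set.Finite.subset (Set.finite_singleton (fun _ => v))
    intro π hπ
    funext i
    have : i = 0 := Fin.fin_one_eq_zero i
    simp [this, hπ.1]
  | succ n ih =>
    intro v
    have hsub : {π : Fin (n+2) → V | π 0 = v ∧ ∀ i : Fin (n+1), G.Adj (π i.castSucc) (π i.succ)}
        ⊆ ⋃ π' ∈ {π : Fin (n+1) → V | π 0 = v ∧ ∀ i : Fin n, G.Adj (π i.castSucc) (π i.succ)},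
            (fun x => Fin.snoc π' x) '' (G.neighborSet (π' (Fin.last n))) := by
      intro ρ hρ
      apply Set.mem_biUnion (x := Fin.init ρ)
      · constructor
        · show ρ (Fin.castSucc 0) = v
          simpa using hρ.1
        · intro i
          have := hρ.2 i.castSucc
          simpa [Fin.init, Fin.succ_castSucc, -Fin.castSucc_succ] using this
      · refine ⟨ρ (Fin.last (n+1)), ?_, ?_⟩
        · have := hρ.2 (Fin.last n)
          simpa [Fin.init, Fin.succ_last] using this
        · exact Fin.snoc_init_self ρ
    refine Set.Finite.subset (Set.Finite.biUnion (ih v) ?_) hsub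
    intro π' _
    exact Set.Finite.image _ (Set.toFinite _)

section Aux

variable {V : Type*} (G : SimpleGraph V) (h : V → ℤ) (φ : V → V → ℝ)

lemma bridgeSet_finite (hlf : G.LocallyFinite) (n : ℕ) (v : V) :
    {π : Fin (n+1) → V | GraphSAW G n π ∧ IsBridgeWalk h n π ∧ π 0 = v}.Finite := by
  apply Set.Finite.subset (walkSet_finite G hlf n v)
  intro π hπ
  exact ⟨hπ.2.2, hπ.1.2⟩

lemma bridge_subtype_finite (hlf : G.LocallyFinite) (n : ℕ) (v : V) :
    Finite {π : Fin (n+1) → V // GraphSAW G n π ∧ IsBridgeWalk h n π ∧ π 0 = v} :=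
  (bridgeSet_finite G h hlf n v).to_subtype

/-- the bridge finset -/
noncomputable def bset (hlf : G.LocallyFinite) (n : ℕ) (v : V) : Finset (Fin (n+1) → V) :=
  (bridgeSet_finite G h hlf n v).toFinset

lemma mem_bset {hlf : G.LocallyFinite} {n : ℕ} {v : V} {π : Fin (n+1) → V} :
    π ∈ bset G h hlf n v ↔ GraphSAW G n π ∧ IsBridgeWalk h n π ∧ π 0 = v := by
  simp [bset, Set.Finite.mem_toFinset, Set.mem_setOf_eq]

lemma bridgeWeightFrom_eq_sum (hlf : G.LocallyFinite) (n : ℕ) (v : V) :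
    bridgeWeightFrom G h φ n v = ∑ π ∈ bset G h hlf n v, walkWeight φ n π := by
  rw [bridgeWeightFrom]
  have := bridge_subtype_finite G h hlf n v
  have : Fintype {π : Fin (n+1) → V // GraphSAW G n π ∧ IsBridgeWalk h n π ∧ π 0 = v} :=
    Fintype.ofFinite _
  rw [tsum_fintype]
  exact (Finset.sum_subtype (bset G h hlf n v) (fun x => mem_bset G h) (walkWeight φ n)).symm

lemma walkWeight_nonneg (hφpos : ∀ u v : V, G.Adj u v → 0 < φ u v)
    {n : ℕ} {π : Fin (n+1) → V} (hadj : ∀ i : Fin n, G.Adj (π i.castSucc) (π i.succ)) :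
    0 < walkWeight φ n π := by
  apply Finset.prod_pos
  intro i _
  exact hφpos _ _ (hadj i)

lemma bset_nonempty (hupdown : ∀ v : V, ∃ u w : V, G.Adj v u ∧ G.Adj v w ∧ h u < h v ∧ h v < h w)
    (hlf : G.LocallyFinite) (n : ℕ) (v : V) : (bset G h hlf n v).Nonempty := by
  classical
  -- construct an increasing walk
  have up : ∀ x : V, ∃ y : V, G.Adj x y ∧ h x < h y := by
    intro x
    obtain ⟨u, w, _, hadj, _, hlt⟩ := hupdown x
    exact ⟨w, hadj, hlt⟩
  choose f hf1 hf2 using up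
  let g : ℕ → V := fun k => Nat.rec v (fun _ x => f x) k
  have hg0 : g 0 = v := rfl
  have hgadj : ∀ k : ℕ, G.Adj (g k) (g (k+1)) := fun k => hf1 (g k)
  have hmono : StrictMono (fun k => h (g k)) :=
    strictMono_nat_of_lt_succ (fun k => hf2 (g k))
  refine ⟨fun i : Fin (n+1) => g i, ?_⟩
  rw [mem_bset]
  refine ⟨⟨?_, ?_⟩, ?_, hg0⟩
  · intro a b hab
    have : h (g (a : ℕ)) = h (g (b : ℕ)) := by simp only at hab; rw [hab]
    exact Fin.ext (hmono.injective this)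
  · intro i
    simpa using hgadj (i : ℕ)
  · intro i
    constructor
    · intro hi
      refine hmono (?_ : (0:ℕ) < (i:ℕ))
      exact Nat.pos_of_ne_zero (fun hz => hi (Fin.ext hz))
    · exact hmono.monotone (by simpa using Nat.lt_succ_iff.mp i.isLt)

lemma bridgeWeightFrom_pos (hφpos : ∀ u v : V, G.Adj u v → 0 < φ u v)
    (hupdown : ∀ v : V, ∃ u w : V, G.Adj v u ∧ G.Adj v w ∧ h u < h v ∧ h v < h w)
    (hlf : G.LocallyFinite) (n : ℕ) (v : V) : 0 < bridgeWeightFrom G h φ n v := by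
  rw [bridgeWeightFrom_eq_sum G h φ hlf n v]
  apply Finset.sum_pos
  · intro π hπ
    exact walkWeight_nonneg G φ hφpos ((mem_bset G h).mp hπ).1.2
  · exact bset_nonempty G h hupdown hlf n v

lemma bridgeWeightFrom_invariant (hlf : G.LocallyFinite) (α : G ≃g G)
    (hα1 : ∀ u v : V, φ (α u) (α v) = φ u v)
    (hα2 : ∀ u v : V, h (α v) - h (α u) = h v - h u)
    (n : ℕ) (v : V) :
    bridgeWeightFrom G h φ n (α v) = bridgeWeightFrom G h φ n v := by
  have hs1 : ∀ u v : V, φ (α.symm u) (α.symm v) = φ u v := by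
    intro u v
    rw [← hα1 (α.symm u) (α.symm v)]
    simp
  have hs2 : ∀ u v : V, h (α.symm v) - h (α.symm u) = h v - h u := by
    intro u v
    rw [← hα2 (α.symm u) (α.symm v)]
    simp
  have key : ∀ (β : G ≃g G), (∀ u v : V, φ (β u) (β v) = φ u v) →
      (∀ u v : V, h (β v) - h (β u) = h v - h u) →
      ∀ w : V, ∀ π ∈ bset G h hlf n w, (⇑β ∘ π) ∈ bset G h hlf n (β w) := by
    intro β hβ1 hβ2 w π hπ
    rw [mem_bset] at hπ ⊢
    obtain ⟨⟨hinj, hadj⟩, hbr, h0⟩ := hπ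
    refine ⟨⟨β.injective.comp hinj, fun i => ?_⟩, fun i => ?_, by simp [Function.comp, h0]⟩
    · exact β.map_adj_iff.mpr (hadj i)
    · obtain ⟨hb1, hb2⟩ := hbr i
      constructor
      · intro hi
        have := hβ2 (π 0) (π i)
        have := hb1 hi
        simp only [Function.comp_apply]
        omega
      · have := hβ2 (π (Fin.last n)) (π i)
        simp only [Function.comp_apply]
        omega
  rw [bridgeWeightFrom_eq_sum G h φ hlf, bridgeWeightFrom_eq_sum G h φ hlf]
  refine Finset.sum_nbij' (fun π => ⇑α.symm ∘ π) (fun π => ⇑α ∘ π) ?_ ?_ ?_ ?_ ?_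
  · intro π hπ
    have := key α.symm hs1 hs2 (α v) π hπ
    simpa using this
  · exact fun π hπ => key α hα1 hα2 v π hπ
  · intro π _
    funext i; simp
  · intro π _
    funext i; simp
  · intro π _
    unfold walkWeight
    apply Finset.prod_congr rfl
    intro i _
    simp [hs1]

/-- Concatenation of two walks (dropping the duplicated junction vertex). -/
def catWalk {m n : ℕ} (π : Fin (m+1) → V) (σ : Fin (n+1) → V) : Fin (m+n+1) → V :=
  fun k => Fin.append (fun i : Fin m => π i.castSucc) σ (Fin.cast (by omega) k)

lemma catWalk_apply_le {m n : ℕ} {π : Fin (m+1) → V} {σ : Fin (n+1) → V}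
    (hσ0 : σ 0 = π (Fin.last m)) (k : Fin (m+n+1)) (hk : (k:ℕ) ≤ m) :
    catWalk π σ k = π ⟨k, Nat.lt_succ_of_le hk⟩ := by
  rcases lt_or_eq_of_le hk with hk' | hk'
  · have hkk : (Fin.cast (by omega : m+n+1 = m+(n+1)) k) = Fin.castAdd (n+1) ⟨(k:ℕ), hk'⟩ :=
      Fin.ext rfl
    rw [catWalk, hkk, Fin.append_left]
    congr 1
  · have hkk : (Fin.cast (by omega : m+n+1 = m+(n+1)) k) = Fin.natAdd m (0 : Fin (n+1)) :=
      Fin.ext (by simp [← hk'])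
    rw [catWalk, hkk, Fin.append_right, hσ0]
    congr 1
    exact Fin.ext (by simp [hk'])

lemma catWalk_apply_ge {m n : ℕ} {π : Fin (m+1) → V} {σ : Fin (n+1) → V}
    (k : Fin (m+n+1)) (hk : m ≤ (k:ℕ)) :
    catWalk π σ k = σ ⟨(k:ℕ) - m, by omega⟩ := by
  have hkk : (Fin.cast (by omega : m+n+1 = m+(n+1)) k) = Fin.natAdd m ⟨(k:ℕ) - m, by omega⟩ :=
    Fin.ext (by simp; omega)
  rw [catWalk, hkk, Fin.append_right]

lemma catWalk_mem {hlf : G.LocallyFinite} {m n : ℕ} {v : V}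
    {π : Fin (m+1) → V} {σ : Fin (n+1) → V}
    (hπ : π ∈ bset G h hlf m v) (hσ : σ ∈ bset G h hlf n (π (Fin.last m))) :
    catWalk π σ ∈ bset G h hlf (m+n) v := by
  rw [mem_bset] at hπ hσ ⊢
  obtain ⟨⟨hπinj, hπadj⟩, hπbr, hπ0⟩ := hπ
  obtain ⟨⟨hσinj, hσadj⟩, hσbr, hσ0⟩ := hσ
  have hπle : ∀ i : Fin (m+1), h (π i) ≤ h (π (Fin.last m)) := fun i => (hπbr i).2
  have hσle : ∀ i : Fin (n+1), h (σ i) ≤ h (σ (Fin.last n)) := fun i => (hσbr i).2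
  have cross : ∀ (k l : Fin (m+n+1)), (k:ℕ) ≤ m → m < (l:ℕ) →
      catWalk π σ k ≠ catWalk π σ l := by
    intro k l hk hl heq
    rw [catWalk_apply_le hσ0 k hk, catWalk_apply_ge l (le_of_lt hl)] at heq
    have hj0 : (⟨(l:ℕ) - m, by omega⟩ : Fin (n+1)) ≠ 0 := by
      intro hE
      have := congrArg Fin.val hE
      simp at this
      omega
    have h1 : h (σ 0) < h (σ ⟨(l:ℕ) - m, by omega⟩) := (hσbr _).1 hj0
    have h2 : h (π ⟨(k:ℕ), Nat.lt_succ_of_le hk⟩) ≤ h (π (Fin.last m)) := hπle _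
    have h3 : h (π ⟨(k:ℕ), Nat.lt_succ_of_le hk⟩) = h (σ ⟨(l:ℕ) - m, by omega⟩) :=
      congrArg h heq
    rw [hσ0] at h1
    omega
  refine ⟨⟨?_, ?_⟩, ?_, ?_⟩
  · -- injective
    intro k l heq
    rcases le_or_gt (k:ℕ) m with hk | hk <;> rcases le_or_gt (l:ℕ) m with hl | hl
    · rw [catWalk_apply_le hσ0 k hk, catWalk_apply_le hσ0 l hl] at heq
      have := congrArg Fin.val (hπinj heq)
      simp at this
      exact Fin.ext this
    · exact absurd heq (cross k l hk hl)
    · exact absurd heq.symm (cross l k hl hk)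
    · rw [catWalk_apply_ge k (le_of_lt hk), catWalk_apply_ge l (le_of_lt hl)] at heq
      have := congrArg Fin.val (hσinj heq)
      simp at this
      exact Fin.ext (by omega)
  · -- adjacency
    intro i
    rcases lt_or_ge (i:ℕ) m with hi | hi
    · have e1 : catWalk π σ i.castSucc = π ⟨(i:ℕ), by omega⟩ := by
        rw [catWalk_apply_le hσ0 i.castSucc (by simp; omega)]
        exact congrArg π (Fin.ext (by simp))
      have e2 : catWalk π σ i.succ = π ⟨(i:ℕ)+1, by omega⟩ := by
        rw [catWalk_apply_le hσ0 i.succ (by simp; omega)]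
        exact congrArg π (Fin.ext (by simp))
      rw [e1, e2]
      have := hπadj ⟨(i:ℕ), hi⟩
      convert this using 2 <;> exact Fin.ext (by simp)
    · have e1 : catWalk π σ i.castSucc = σ ⟨(i:ℕ) - m, by omega⟩ := by
        rw [catWalk_apply_ge i.castSucc (by simpa using hi)]
        exact congrArg σ (Fin.ext (by simp))
      have e2 : catWalk π σ i.succ = σ ⟨(i:ℕ) - m + 1, by omega⟩ := by
        rw [catWalk_apply_ge i.succ (by simp; omega)]
        exact congrArg σ (Fin.ext (by simp; omega))
      rw [e1, e2]
      have := hσadj ⟨(i:ℕ) - m, by omega⟩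
      convert this using 2 <;> exact Fin.ext (by simp)
  · -- bridge
    intro k
    have hlast : catWalk π σ (Fin.last (m+n)) = σ (Fin.last n) := by
      rw [catWalk_apply_ge (Fin.last (m+n)) (by simp)]
      congr 1
      exact Fin.ext (by simp)
    have hzero : catWalk π σ 0 = π 0 := by
      rw [catWalk_apply_le hσ0 0 (by simp)]
      congr 1
    have hπ0le : h (π 0) ≤ h (π (Fin.last m)) := (hπbr 0).2
    have hσ0le : h (σ 0) ≤ h (σ (Fin.last n)) := (hσbr 0).2
    rcases le_or_gt (k:ℕ) m with hk | hk
    · have ek : catWalk π σ k = π ⟨(k:ℕ), Nat.lt_succ_of_le hk⟩ := catWalk_apply_le hσ0 k hk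
      constructor
      · intro hk0
        rw [hzero, ek]
        refine (hπbr _).1 ?_
        intro hE
        have := congrArg Fin.val hE
        simp at this
        exact hk0 (Fin.ext (by simpa using this))
      · rw [hlast, ek]
        have := hπle ⟨(k:ℕ), Nat.lt_succ_of_le hk⟩
        rw [hσ0] at hσ0le
        omega
    · have ek : catWalk π σ k = σ ⟨(k:ℕ) - m, by omega⟩ := catWalk_apply_ge k (le_of_lt hk)
      have hj0 : (⟨(k:ℕ) - m, by omega⟩ : Fin (n+1)) ≠ 0 := by
        intro hE
        have := congrArg Fin.val hE
        simp at this
        omega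
      have h1 : h (σ 0) < h (σ ⟨(k:ℕ) - m, by omega⟩) := (hσbr _).1 hj0
      constructor
      · intro _
        rw [hzero, ek]
        rw [hσ0] at h1
        omega
      · rw [hlast, ek]
        exact hσle _
  · rw [catWalk_apply_le hσ0 0 (by simp), ← hπ0]
    congr 1

lemma walkWeight_cat {m n : ℕ} {π : Fin (m+1) → V} {σ : Fin (n+1) → V}
    (hσ0 : σ 0 = π (Fin.last m)) :
    walkWeight φ (m+n) (catWalk π σ) = walkWeight φ m π * walkWeight φ n σ := by
  unfold walkWeight
  rw [Fin.prod_univ_add (f := fun i : Fin (m+n) =>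
    φ (catWalk π σ i.castSucc) (catWalk π σ i.succ))]
  congr 1
  · apply Finset.prod_congr rfl
    intro i _
    have e1 : catWalk π σ (Fin.castAdd n i).castSucc = π i.castSucc := by
      rw [catWalk_apply_le hσ0 _ (by simp <;> omega)]
      exact congrArg π (Fin.ext (by simp))
    have e2 : catWalk π σ (Fin.castAdd n i).succ = π i.succ := by
      rw [catWalk_apply_le hσ0 _ (by simp <;> omega)]
      exact congrArg π (Fin.ext (by simp))
    rw [e1, e2]
  · apply Finset.prod_congr rfl
    intro i _
    have e1 : catWalk π σ (Fin.natAdd m i).castSucc = σ i.castSucc := by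
      rw [catWalk_apply_ge _ (by simp <;> omega)]
      exact congrArg σ (Fin.ext (by simp))
    have e2 : catWalk π σ (Fin.natAdd m i).succ = σ i.succ := by
      rw [catWalk_apply_ge _ (by simp <;> omega)]
      exact congrArg σ (Fin.ext (by simp; omega))
    rw [e1, e2]

lemma catWalk_recover_left {m n : ℕ} {π : Fin (m+1) → V} {σ : Fin (n+1) → V}
    (hσ0 : σ 0 = π (Fin.last m)) (i : Fin (m+1)) :
    catWalk π σ ⟨(i:ℕ), by omega⟩ = π i := by
  rw [catWalk_apply_le hσ0 _ (by simp; omega)]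

lemma catWalk_recover_right {m n : ℕ} {π : Fin (m+1) → V} {σ : Fin (n+1) → V}
    (j : Fin (n+1)) :
    catWalk π σ ⟨m + (j:ℕ), by omega⟩ = σ j := by
  rw [catWalk_apply_ge _ (by simp)]
  exact congrArg σ (Fin.ext (by simp))

lemma walkWeight_pos_of_mem (hlf : G.LocallyFinite)
    (hφpos : ∀ u v : V, G.Adj u v → 0 < φ u v)
    {k : ℕ} {u : V} {π : Fin (k+1) → V} (hπ : π ∈ bset G h hlf k u) :
    0 < walkWeight φ k π :=
  walkWeight_nonneg G φ hφpos ((mem_bset G h).mp hπ).1.2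

lemma bwf_mul_le (hlf : G.LocallyFinite) (hφpos : ∀ u v : V, G.Adj u v → 0 < φ u v)
    (m n : ℕ) (v : V) {c : ℝ} (hc : 0 ≤ c)
    (hb : ∀ u : V, c ≤ bridgeWeightFrom G h φ n u) :
    bridgeWeightFrom G h φ m v * c ≤ bridgeWeightFrom G h φ (m+n) v := by
  classical
  rw [bridgeWeightFrom_eq_sum G h φ hlf m v, bridgeWeightFrom_eq_sum G h φ hlf (m+n) v,
    Finset.sum_mul]
  calc ∑ π ∈ bset G h hlf m v, walkWeight φ m π * c
      ≤ ∑ π ∈ bset G h hlf m v, walkWeight φ m π * bridgeWeightFrom G h φ n (π (Fin.last m)) := by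
        apply Finset.sum_le_sum
        intro π hπ
        exact mul_le_mul_of_nonneg_left (hb _) (walkWeight_pos_of_mem G h φ hlf hφpos hπ).le
    _ = ∑ π ∈ bset G h hlf m v, ∑ σ ∈ bset G h hlf n (π (Fin.last m)),
          walkWeight φ m π * walkWeight φ n σ := by
        apply Finset.sum_congr rfl
        intro π _
        rw [bridgeWeightFrom_eq_sum G h φ hlf n, Finset.mul_sum]
    _ = ∑ p ∈ (bset G h hlf m v).sigma (fun π => bset G h hlf n (π (Fin.last m))),
          walkWeight φ m p.1 * walkWeight φ n p.2 :=
        (Finset.sum_sigma (bset G h hlf m v) (fun π => bset G h hlf n (π (Fin.last m)))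
          (fun p => walkWeight φ m p.1 * walkWeight φ n p.2)).symm
    _ = ∑ p ∈ (bset G h hlf m v).sigma (fun π => bset G h hlf n (π (Fin.last m))),
          walkWeight φ (m+n) (catWalk p.1 p.2) := by
        apply Finset.sum_congr rfl
        intro p hp
        rw [Finset.mem_sigma] at hp
        exact (walkWeight_cat φ ((mem_bset G h).mp hp.2).2.2).symm
    _ = ∑ ρ ∈ ((bset G h hlf m v).sigma
            (fun π => bset G h hlf n (π (Fin.last m)))).image (fun p => catWalk p.1 p.2),
          walkWeight φ (m+n) ρ := by
        rw [Finset.sum_image]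
        intro p hp q hq heq
        rw [Finset.mem_coe, Finset.mem_sigma] at hp hq
        simp only at heq
        have hp0 := ((mem_bset G h).mp hp.2).2.2
        have hq0 := ((mem_bset G h).mp hq.2).2.2
        have h1 : p.1 = q.1 := by
          funext i
          rw [← catWalk_recover_left hp0 i, ← catWalk_recover_left hq0 i, heq]
        have h2 : p.2 = q.2 := by
          funext j
          rw [← catWalk_recover_right (π := p.1) (σ := p.2) j,
            ← catWalk_recover_right (π := q.1) (σ := q.2) j, heq]
        exact Sigma.ext h1 (heq_of_eq h2)
    _ ≤ ∑ ρ ∈ bset G h hlf (m+n) v, walkWeight φ (m+n) ρ := by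
        apply Finset.sum_le_sum_of_subset_of_nonneg
        · intro ρ hρ
          rw [Finset.mem_image] at hρ
          obtain ⟨p, hp, rfl⟩ := hρ
          rw [Finset.mem_sigma] at hp
          exact catWalk_mem G h hp.1 hp.2
        · intro ρ hρ _
          exact (walkWeight_pos_of_mem G h φ hlf hφpos hρ).le

lemma range_finite (hlf : G.LocallyFinite) (H : Subgroup (G ≃g G))
    (hqt : ∃ s : Finset V, ∀ v : V, ∃ α ∈ H, ∃ u ∈ s, α u = v)
    (hφinv : ∀ α ∈ H, ∀ u v : V, φ (α u) (α v) = φ u v)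
    (hdi : ∀ α ∈ H, ∀ u v : V, h (α v) - h (α u) = h v - h u)
    (n : ℕ) : (Set.range (bridgeWeightFrom G h φ n)).Finite := by
  obtain ⟨s, hs⟩ := hqt
  apply Set.Finite.subset (s.finite_toSet.image (bridgeWeightFrom G h φ n))
  rintro _ ⟨v, rfl⟩
  obtain ⟨α, hα, u, hu, rfl⟩ := hs v
  exact ⟨u, hu, (bridgeWeightFrom_invariant G h φ hlf α (hφinv α hα) (hdi α hα) n u).symm⟩

lemma minBW_le (n : ℕ) (hfin : (Set.range (bridgeWeightFrom G h φ n)).Finite) (v : V) :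
    minBridgeWeight G h φ n ≤ bridgeWeightFrom G h φ n v :=
  csInf_le hfin.bddBelow ⟨v, rfl⟩

lemma minBW_mem (n : ℕ) (hfin : (Set.range (bridgeWeightFrom G h φ n)).Finite) (v₀ : V) :
    ∃ v : V, minBridgeWeight G h φ n = bridgeWeightFrom G h φ n v := by
  have : minBridgeWeight G h φ n ∈ Set.range (bridgeWeightFrom G h φ n) :=
    Set.Nonempty.csInf_mem ⟨_, ⟨v₀, rfl⟩⟩ hfin
  obtain ⟨v, hv⟩ := this
  exact ⟨v, hv.symm⟩

/-- the walk finset -/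
noncomputable def wset (hlf : G.LocallyFinite) (n : ℕ) (v : V) : Finset (Fin (n+1) → V) :=
  (walkSet_finite G hlf n v).toFinset

lemma mem_wset {hlf : G.LocallyFinite} {n : ℕ} {v : V} {π : Fin (n+1) → V} :
    π ∈ wset G hlf n v ↔ π 0 = v ∧ ∀ i : Fin n, G.Adj (π i.castSucc) (π i.succ) := by
  simp [wset, Set.Finite.mem_toFinset, Set.mem_setOf_eq]

lemma bwf_le_wsum (hlf : G.LocallyFinite) (hφpos : ∀ u v : V, G.Adj u v → 0 < φ u v)
    (n : ℕ) (v : V) :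
    bridgeWeightFrom G h φ n v ≤ ∑ ρ ∈ wset G hlf n v, walkWeight φ n ρ := by
  rw [bridgeWeightFrom_eq_sum G h φ hlf n v]
  apply Finset.sum_le_sum_of_subset_of_nonneg
  · intro π hπ
    rw [mem_bset] at hπ
    exact (mem_wset G).mpr ⟨hπ.2.2, hπ.1.2⟩
  · intro π hπ _
    exact (walkWeight_nonneg G φ hφpos ((mem_wset G).mp hπ).2).le

lemma wsum_le (hlf : G.LocallyFinite) (hφpos : ∀ u v : V, G.Adj u v → 0 < φ u v)
    {C : ℝ} (hC1 : 1 ≤ C)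
    (hD : ∀ u : V, ∑ x ∈ G.neighborFinset u, φ u x ≤ C) :
    ∀ (n : ℕ) (v : V), ∑ ρ ∈ wset G hlf n v, walkWeight φ n ρ ≤ C ^ n := by
  classical
  have hC0 : 0 ≤ C := le_trans zero_le_one hC1
  intro n
  induction n with
  | zero =>
    intro v
    have hsub : wset G hlf 0 v ⊆ {fun _ => v} := by
      intro π hπ
      rw [mem_wset] at hπ
      rw [Finset.mem_singleton]
      funext i
      rw [Fin.fin_one_eq_zero i, hπ.1]
    calc ∑ ρ ∈ wset G hlf 0 v, walkWeight φ 0 ρ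
        ≤ ∑ ρ ∈ {fun _ => v}, walkWeight φ 0 ρ := by
          apply Finset.sum_le_sum_of_subset_of_nonneg hsub
          intro ρ _ _
          simp [walkWeight]
      _ = 1 := by simp [walkWeight]
      _ ≤ C ^ 0 := by simp
  | succ n ih =>
    intro v
    have key : ∑ ρ ∈ wset G hlf (n+1) v, walkWeight φ (n+1) ρ ≤
        ∑ p ∈ (wset G hlf n v).sigma (fun π => G.neighborFinset (π (Fin.last n))),
          walkWeight φ n p.1 * φ (p.1 (Fin.last n)) p.2 := by
      have himg : ∀ ρ ∈ wset G hlf (n+1) v,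
          (⟨Fin.init ρ, ρ (Fin.last (n+1))⟩ : (_ : Fin (n+1) → V) × V) ∈
            (wset G hlf n v).sigma (fun π => G.neighborFinset (π (Fin.last n))) := by
        intro ρ hρ
        rw [mem_wset] at hρ
        rw [Finset.mem_sigma]
        constructor
        · rw [mem_wset]
          refine ⟨?_, ?_⟩
          · show ρ (Fin.castSucc 0) = v
            simpa using hρ.1
          · intro i
            have := hρ.2 i.castSucc
            simpa [Fin.init, Fin.succ_castSucc, -Fin.castSucc_succ] using this
        · rw [SimpleGraph.mem_neighborFinset]
          have := hρ.2 (Fin.last n)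
          simpa [Fin.init, Fin.succ_last] using this
      have hterm : ∀ ρ ∈ wset G hlf (n+1) v,
          walkWeight φ (n+1) ρ = walkWeight φ n (Fin.init ρ) *
            φ (Fin.init ρ (Fin.last n)) (ρ (Fin.last (n+1))) := by
        intro ρ _
        unfold walkWeight
        rw [Fin.prod_univ_castSucc (f := fun i : Fin (n+1) =>
          φ (ρ i.castSucc) (ρ i.succ))]
        have : ∀ i : Fin n, φ (ρ i.castSucc.castSucc) (ρ i.castSucc.succ) =
            φ (Fin.init ρ i.castSucc) (Fin.init ρ i.succ) := by
          intro i
          simp [Fin.init, Fin.succ_castSucc, -Fin.castSucc_succ]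
        rw [Finset.prod_congr rfl (fun i _ => this i)]
        congr 1 <;> simp [Fin.init, Fin.succ_last]
      calc ∑ ρ ∈ wset G hlf (n+1) v, walkWeight φ (n+1) ρ
          = ∑ ρ ∈ wset G hlf (n+1) v, walkWeight φ n (Fin.init ρ) *
              φ (Fin.init ρ (Fin.last n)) (ρ (Fin.last (n+1))) :=
            Finset.sum_congr rfl hterm
        _ = ∑ p ∈ (wset G hlf (n+1) v).image
              (fun ρ => (⟨Fin.init ρ, ρ (Fin.last (n+1))⟩ : (_ : Fin (n+1) → V) × V)),
              walkWeight φ n p.1 * φ (p.1 (Fin.last n)) p.2 := by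
            rw [Finset.sum_image]
            intro ρ₁ _ ρ₂ _ heq
            have h1 : Fin.init ρ₁ = Fin.init ρ₂ := congrArg Sigma.fst heq
            have h2 : ρ₁ (Fin.last (n+1)) = ρ₂ (Fin.last (n+1)) := by
              have := congrArg Sigma.snd heq
              simpa using this
            rw [← Fin.snoc_init_self ρ₁, ← Fin.snoc_init_self ρ₂, h1, h2]
        _ ≤ _ := by
            apply Finset.sum_le_sum_of_subset_of_nonneg
            · intro p hp
              rw [Finset.mem_image] at hp
              obtain ⟨ρ, hρ, rfl⟩ := hp
              exact himg ρ hρ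
            · intro p hp _
              rw [Finset.mem_sigma, mem_wset] at hp
              exact mul_nonneg (walkWeight_nonneg G φ hφpos hp.1.2).le
                (hφpos _ _ ((SimpleGraph.mem_neighborFinset _ _ _).mp hp.2)).le
    calc ∑ ρ ∈ wset G hlf (n+1) v, walkWeight φ (n+1) ρ
        ≤ ∑ p ∈ (wset G hlf n v).sigma (fun π => G.neighborFinset (π (Fin.last n))),
          walkWeight φ n p.1 * φ (p.1 (Fin.last n)) p.2 := key
      _ = ∑ π ∈ wset G hlf n v, walkWeight φ n π *
            (∑ x ∈ G.neighborFinset (π (Fin.last n)), φ (π (Fin.last n)) x) := by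
          rw [Finset.sum_sigma]
          apply Finset.sum_congr rfl
          intro π _
          rw [Finset.mul_sum]
      _ ≤ ∑ π ∈ wset G hlf n v, walkWeight φ n π * C := by
          apply Finset.sum_le_sum
          intro π hπ
          exact mul_le_mul_of_nonneg_left (hD _)
            (walkWeight_nonneg G φ hφpos ((mem_wset G).mp hπ).2).le
      _ = (∑ π ∈ wset G hlf n v, walkWeight φ n π) * C := by rw [Finset.sum_mul]
      _ ≤ C ^ n * C := mul_le_mul_of_nonneg_right (ih v) hC0
      _ = C ^ (n+1) := by ring

end Aux

/-- On a connected, infinite, quasi-transitive, locally finite graph with a graph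
height function `(h, H)` and `H`-invariant weights, the minimal bridge weights are
supermultiplicative, the bridge constant `β = lim w(β_n)^{1/n}` exists, and
`w(β_n) ≤ β^n` for all `n`. -/
theorem bridge_weight_supermultiplicative_and_limit {V : Type*} (G : SimpleGraph V)
    (hconn : G.Connected) (hinf : Infinite V) (hlf : G.LocallyFinite)
    (H : Subgroup (G ≃g G))
    (hqt : ∃ s : Finset V, ∀ v : V, ∃ α ∈ H, ∃ u ∈ s, α u = v)
    (φ : V → V → ℝ)
    (hφsym : ∀ u v : V, φ u v = φ v u)
    (hφpos : ∀ u v : V, G.Adj u v → 0 < φ u v)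
    (hφinv : ∀ α ∈ H, ∀ u v : V, φ (α u) (α v) = φ u v)
    (v₀ : V) (h : V → ℤ) (h0 : h v₀ = 0)
    (hdi : ∀ α ∈ H, ∀ u v : V, h (α v) - h (α u) = h v - h u)
    (hupdown : ∀ v : V, ∃ u w : V, G.Adj v u ∧ G.Adj v w ∧ h u < h v ∧ h v < h w) :
    (∀ m n : ℕ,
      minBridgeWeight G h φ m * minBridgeWeight G h φ n ≤ minBridgeWeight G h φ (m + n)) ∧
    ∃ β : ℝ,
      Tendsto (fun n : ℕ => (minBridgeWeight G h φ n) ^ (1 / (n : ℝ))) atTop (𝓝 β) ∧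
      ∀ n : ℕ, minBridgeWeight G h φ n ≤ β ^ n := by
  classical
  set B : ℕ → ℝ := fun n => minBridgeWeight G h φ n with hB
  have hfin : ∀ n, (Set.range (bridgeWeightFrom G h φ n)).Finite :=
    fun n => range_finite G h φ hlf H hqt hφinv hdi n
  have hle : ∀ (n : ℕ) (v : V), B n ≤ bridgeWeightFrom G h φ n v :=
    fun n v => minBW_le G h φ n (hfin n) v
  have hmem : ∀ n : ℕ, ∃ v : V, B n = bridgeWeightFrom G h φ n v :=
    fun n => minBW_mem G h φ n (hfin n) v₀
  have hpos : ∀ n : ℕ, 0 < B n := by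
    intro n
    obtain ⟨v, hv⟩ := hmem n
    rw [hv]
    exact bridgeWeightFrom_pos G h φ hφpos hupdown hlf n v
  have hsuper : ∀ m n : ℕ, B m * B n ≤ B (m + n) := by
    intro m n
    obtain ⟨v, hv⟩ := hmem (m + n)
    calc B m * B n ≤ bridgeWeightFrom G h φ m v * B n :=
          mul_le_mul_of_nonneg_right (hle m v) (hpos n).le
      _ ≤ bridgeWeightFrom G h φ (m+n) v :=
          bwf_mul_le G h φ hlf hφpos m n v (hpos n).le (hle n)
      _ = B (m + n) := hv.symm
  refine ⟨hsuper, ?_⟩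
  -- the upper bound C^n
  obtain ⟨s, hs⟩ := hqt
  set D : V → ℝ := fun u => ∑ x ∈ G.neighborFinset u, φ u x with hDdef
  have hDinv : ∀ α ∈ H, ∀ u : V, D (α u) = D u := by
    intro α hα u
    apply Finset.sum_nbij' (fun x => α.symm x) (fun x => α x)
    · intro x hx
      rw [SimpleGraph.mem_neighborFinset] at hx ⊢
      have := α.symm.map_adj_iff.mpr hx
      simpa using this
    · intro x hx
      rw [SimpleGraph.mem_neighborFinset] at hx ⊢
      exact α.map_adj_iff.mpr hx
    · intro x _; simp
    · intro x _; simp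
    · intro x hx
      have : φ (α u) x = φ (α u) (α (α.symm x)) := by simp
      rw [this, hφinv α hα]
  set C : ℝ := 1 + ∑ u ∈ s, |D u| with hCdef
  have habs : (0:ℝ) ≤ ∑ u ∈ s, |D u| := Finset.sum_nonneg (fun u _ => abs_nonneg _)
  have hC1 : 1 ≤ C := by rw [hCdef]; linarith
  have hD : ∀ v : V, D v ≤ C := by
    intro v
    obtain ⟨α, hα, u, hu, rfl⟩ := hs v
    rw [hDinv α hα u]
    calc D u ≤ |D u| := le_abs_self _
      _ ≤ ∑ u' ∈ s, |D u'| := Finset.single_le_sum (fun u' _ => abs_nonneg (D u')) hu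
      _ ≤ C := by rw [hCdef]; linarith
  have hub : ∀ n : ℕ, B n ≤ C ^ n := by
    intro n
    calc B n ≤ bridgeWeightFrom G h φ n v₀ := hle n v₀
      _ ≤ ∑ ρ ∈ wset G hlf n v₀, walkWeight φ n ρ := bwf_le_wsum G h φ hlf hφpos n v₀
      _ ≤ C ^ n := wsum_le G φ hlf hφpos hC1 hD n v₀
  -- Fekete
  set u : ℕ → ℝ := fun n => -Real.log (B n) with hudef
  have hsub : Subadditive u := by
    intro m n
    have h1 : Real.log (B m * B n) ≤ Real.log (B (m + n)) :=
      Real.log_le_log (mul_pos (hpos m) (hpos n)) (hsuper m n)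
    rw [Real.log_mul (hpos m).ne' (hpos n).ne'] at h1
    simp only [hudef]
    linarith
  have hlogC : ∀ n : ℕ, Real.log (B n) ≤ n * Real.log C := by
    intro n
    calc Real.log (B n) ≤ Real.log (C ^ n) := Real.log_le_log (hpos n) (hub n)
      _ = n * Real.log C := by rw [Real.log_pow]
  have hbdd : BddBelow (Set.range fun n : ℕ => u n / n) := by
    refine ⟨min 0 (-Real.log C), ?_⟩
    rintro _ ⟨n, rfl⟩
    rcases Nat.eq_zero_or_pos n with hn | hn
    · simp [hn]
    · have hn' : (0:ℝ) < n := by exact_mod_cast hn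
      have h2 : -Real.log C ≤ u n / n := by
        rw [le_div_iff₀ hn']
        have := hlogC n
        simp only [hudef]
        linarith
      exact le_trans (min_le_right _ _) h2
  have hlim := hsub.tendsto_lim hbdd
  set L : ℝ := -hsub.lim with hLdef
  refine ⟨Real.exp L, ?_, ?_⟩
  · have h1 : Tendsto (fun n : ℕ => Real.log (B n) / n) atTop (𝓝 L) := by
      have : (fun n : ℕ => Real.log (B n) / n) = fun n : ℕ => -(u n / n) := by
        funext n
        simp [hudef, neg_div]
      rw [this, hLdef]
      exact hlim.neg
    have h2 : Tendsto (fun n : ℕ => Real.exp (Real.log (B n) / n)) atTop (𝓝 (Real.exp L)) :=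
      (Real.continuous_exp.tendsto L).comp h1
    apply h2.congr'
    filter_upwards [eventually_ge_atTop 1] with n hn
    have hn' : (n:ℝ) ≠ 0 := by
      simp only [ne_eq, Nat.cast_eq_zero]
      omega
    rw [Real.rpow_def_of_pos (hpos n), mul_one_div]
  · intro n
    rcases Nat.eq_zero_or_pos n with hn | hn
    · subst hn
      have h00 := hsuper 0 0
      have := hpos 0
      have hB0 : B 0 ≤ 1 := by nlinarith
      simpa using hB0
    · have hlimle := hsub.lim_le_div hbdd (n := n) (by omega)
      have hn' : (0:ℝ) < n := by exact_mod_cast hn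
      have hlog : Real.log (B n) ≤ n * L := by
        rw [hLdef]
        have : hsub.lim * n ≤ u n := by
          rw [← le_div_iff₀ hn'] at *
          exact hlimle
        simp only [hudef] at this
        linarith
      calc B n = Real.exp (Real.log (B n)) := (Real.exp_log (hpos n)).symm
        _ ≤ Real.exp (n * L) := Real.exp_le_exp.mpr hlog
        _ = Real.exp L ^ n := by rw [← Real.exp_nat_mul]
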